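/- Let χ be an integer, a a positive even integer, and p a partition of a all of whose parts are even. Writing d_i = p_i − p_{i+1} for i ≥ 1 (so each d_i is even), one has the congruence ∏_{i≥1} C(2iχ − 1 + d_i, d_i) ≡ (−1)^{a/2} · ∏_{i≥1} C(iχ − 1 + d_i/2, d_i/2) modulo 4, both products being finite. -/

import Mathlib

open Finset

/-- The parts of a partition `p` of `a`, viewed as a weakly decreasing sequence
`p_1 ≥ p_2 ≥ ⋯` padded with zeros; `partSeq p i` is the part `p_{i+1}` (0-indexed). -/
def partSeq {a : ℕ} (p : Nat.Partition a) (i : ℕ) : ℕ :=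
  (p.parts.sort (· ≥ ·)).getD i 0

private lemma four_eq_zero : (4 : ZMod 4) = 0 := by decide

/-- `(2e)! = 2^e · e! · ∏(2t+1)` in `ℤ`. -/
private lemma fact_split (e : ℕ) :
    ((2 * e).factorial : ℤ) = 2 ^ e * (e.factorial : ℤ) * ∏ t ∈ range e, (2 * (t : ℤ) + 1) := by
  induction e with
  | zero => simp
  | succ e ih =>
    have h : 2 * (e + 1) = (2 * e) + 1 + 1 := by ring
    rw [h, Nat.factorial_succ, Nat.factorial_succ, Nat.factorial_succ, prod_range_succ]
    push_cast
    push_cast at ih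
    rw [ih]
    ring

/-- Descending Pochhammer splitting: `D(2m-1, 2e) = 2^e · D(m-1, e) · ∏(2m-1-2t)`. -/
private lemma dp_split (m : ℤ) (e : ℕ) :
    (descPochhammer ℤ (2 * e)).eval (2 * m - 1) =
      2 ^ e * (descPochhammer ℤ e).eval (m - 1) * ∏ t ∈ range e, (2 * m - 1 - 2 * (t : ℤ)) := by
  induction e with
  | zero => simp
  | succ e ih =>
    have h : 2 * (e + 1) = (2 * e) + 1 + 1 := by ring
    rw [h, descPochhammer_succ_eval, descPochhammer_succ_eval, ih,
      descPochhammer_succ_eval, prod_range_succ]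
    push_cast
    ring

private lemma dpfac (x : ℤ) (n : ℕ) :
    (descPochhammer ℤ n).eval x = (n.factorial : ℤ) * Ring.choose x n := by
  rw [Polynomial.eval_eq_smeval, Ring.descPochhammer_eq_factorial_smul_choose, nsmul_eq_mul]

/-- sign of the double factorial mod 4 -/
private lemma osign2 (k : ℕ) :
    (∏ t ∈ range (2 * k), (2 * (t : ZMod 4) + 1)) = (-1) ^ k := by
  induction k with
  | zero => simp
  | succ k ih =>
    have h : 2 * (k + 1) = (2 * k) + 1 + 1 := by ring
    rw [h, prod_range_succ, prod_range_succ, ih]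
    push_cast
    rw [pow_succ]
    linear_combination ((-1 : ZMod 4)^k * (4*(k:ZMod 4)^2 + 4*(k:ZMod 4) + 1)) * four_eq_zero

private lemma osign (e : ℕ) :
    (∏ t ∈ range e, (2 * (t : ZMod 4) + 1)) = (-1) ^ (e / 2) := by
  rcases Nat.even_or_odd e with ⟨k, hk⟩ | ⟨k, hk⟩
  · have : e = 2 * k := by omega
    subst this
    rw [osign2, Nat.mul_div_cancel_left _ (by norm_num)]
  · subst hk
    rw [prod_range_succ, osign2]
    have h2 : (2 * k + 1) / 2 = k := by omega
    rw [h2]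
    push_cast
    linear_combination ((-1 : ZMod 4) ^ k * (k : ZMod 4)) * four_eq_zero

private lemma psign2 (m : ℤ) (k : ℕ) :
    (∏ t ∈ range (2 * k), (2 * (m : ZMod 4) - 1 - 2 * (t : ZMod 4))) = (-1) ^ k := by
  induction k with
  | zero => simp
  | succ k ih =>
    have h : 2 * (k + 1) = (2 * k) + 1 + 1 := by ring
    rw [h, prod_range_succ, prod_range_succ, ih, pow_succ]
    push_cast
    set M := (m : ZMod 4)
    set K := (k : ZMod 4)
    linear_combination ((-1 : ZMod 4)^k * (M^2 - 2*M - 4*M*K + 1 + 4*K + 4*K^2)) * four_eq_zero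

private lemma twom (m : ℤ) : ((2 * m - 1 : ℤ) : ZMod 4) = if Odd m then 1 else -1 := by
  rcases Int.even_or_odd m with ⟨c, hc⟩ | ⟨c, hc⟩
  · rw [if_neg (by simp [Int.not_odd_iff_even.mpr ⟨c, hc⟩])]
    subst hc
    push_cast
    linear_combination (c : ZMod 4) * four_eq_zero
  · rw [if_pos ⟨c, hc⟩]
    subst hc
    push_cast
    linear_combination (c : ZMod 4) * four_eq_zero

private lemma psign (m : ℤ) (e : ℕ) :
    (∏ t ∈ range e, (2 * (m : ZMod 4) - 1 - 2 * (t : ZMod 4))) =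
      (-1) ^ (e / 2) * (if Odd (m - e) ∧ Odd e then -1 else 1) := by
  rcases Nat.even_or_odd e with ⟨k, hk⟩ | ⟨k, hk⟩
  · have he : e = 2 * k := by omega
    subst he
    rw [psign2, Nat.mul_div_cancel_left _ (by norm_num),
      if_neg (by rintro ⟨-, h⟩; exact (Nat.not_odd_iff_even.mpr ⟨k, by omega⟩) h), mul_one]
  · subst hk
    rw [prod_range_succ, psign2]
    have h2 : (2 * k + 1) / 2 = k := by omega
    rw [h2]
    have hterm : (2 * (m : ZMod 4) - 1 - 2 * ((2 * k : ℕ) : ZMod 4))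
        = ((2 * (m - 2 * k) - 1 : ℤ) : ZMod 4) := by push_cast; ring
    rw [hterm, twom]
    have hoddk : Odd (2 * k + 1) := ⟨k, by omega⟩
    by_cases hm : Odd (m - ((2 * k + 1 : ℕ) : ℤ))
    · obtain ⟨c, hc⟩ := hm
      push_cast at hc
      have hA : ¬ Odd (m - 2 * (k : ℤ)) := by
        rintro ⟨d, hd⟩
        omega
      have hB : Odd (m - ((2 * k + 1 : ℕ) : ℤ)) ∧ Odd (2 * k + 1) := ⟨⟨c, by push_cast; omega⟩, hoddk⟩
      rw [if_neg hA, if_pos hB]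
    · have hev : Even (m - ((2 * k + 1 : ℕ) : ℤ)) := Int.not_odd_iff_even.mp hm
      obtain ⟨c, hc⟩ := hev
      push_cast at hc
      have hA : Odd (m - 2 * (k : ℤ)) := ⟨c, by omega⟩
      rw [if_pos hA, if_neg (fun h => hm h.1), mul_one]

private lemma key (y : ℤ) (e : ℕ) :
    ((Ring.choose (2 * y - 1 + 2 * (e : ℤ)) (2 * e) : ℤ) : ZMod 4)
      = (if Odd y ∧ Odd e then -1 else 1) * ((Ring.choose (y - 1 + (e : ℤ)) e : ℤ) : ZMod 4) := by
  have h1 := dpfac (2 * y - 1 + 2 * (e : ℤ)) (2 * e)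
  have h2 := dp_split (y + e) e
  have harg1 : (2 * (y + (e:ℤ)) - 1 : ℤ) = 2 * y - 1 + 2 * e := by ring
  have harg2 : ((y + (e:ℤ)) - 1 : ℤ) = y - 1 + e := by ring
  rw [harg1, harg2] at h2
  have hprod : ∏ t ∈ range e, (2 * y - 1 + 2 * (e:ℤ) - 2 * (t:ℤ))
      = ∏ t ∈ range e, (2 * (y + (e:ℤ)) - 1 - 2 * (t:ℤ)) :=
    Finset.prod_congr rfl (fun t _ => by ring)
  rw [hprod] at h2
  have h3 := dpfac (y - 1 + (e : ℤ)) e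
  rw [h1, h3] at h2
  have h4 := fact_split e
  have hc : (2:ℤ) ^ e * (e.factorial : ℤ) ≠ 0 := by positivity
  have hOF : (∏ t ∈ range e, (2 * (t:ℤ) + 1)) * Ring.choose (2 * y - 1 + 2 * (e : ℤ)) (2 * e)
      = Ring.choose (y - 1 + (e : ℤ)) e * ∏ t ∈ range e, (2 * (y + (e:ℤ)) - 1 - 2 * (t:ℤ)) := by
    apply mul_left_cancel₀ hc
    linear_combination h2 - Ring.choose (2 * y - 1 + 2 * (e : ℤ)) (2 * e) * h4
  have hout := congrArg (Int.cast : ℤ → ZMod 4) hOF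
  push_cast at hout
  rw [osign] at hout
  have hp := psign (y + (e:ℤ)) e
  rw [add_sub_cancel_right] at hp
  push_cast at hp
  rw [hp] at hout
  have hsq : ((-1 : ZMod 4) ^ (e / 2)) * ((-1 : ZMod 4) ^ (e / 2)) = 1 := by
    rw [← pow_add]; exact Even.neg_one_pow ⟨e / 2, rfl⟩
  linear_combination ((-1 : ZMod 4) ^ (e / 2)) * hout
    - (((Ring.choose (2 * y - 1 + 2 * (e : ℤ)) (2 * e) : ℤ) : ZMod 4)
        - (if Odd y ∧ Odd e then (-1 : ZMod 4) else 1)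
          * ((Ring.choose (y - 1 + (e : ℤ)) e : ℤ) : ZMod 4)) * hsq

private lemma even_choose (x : ℤ) (e : ℕ) (hx : Even x) (he : Odd e) :
    (2 : ℤ) ∣ Ring.choose x e := by
  obtain ⟨n, rfl⟩ : ∃ n, e = n + 1 := ⟨e - 1, by rcases he with ⟨k, hk⟩; omega⟩
  have h1 : (descPochhammer ℤ (n + 1)).eval x = x * (descPochhammer ℤ n).eval (x - 1) := by
    rw [descPochhammer_succ_left]
    simp [Polynomial.eval_comp]
  rw [dpfac, dpfac] at h1
  have hn : ((n + 1).factorial : ℤ) = ((n : ℤ) + 1) * n.factorial := by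
    rw [Nat.factorial_succ]; push_cast; ring
  have h2 : ((n : ℤ) + 1) * Ring.choose x (n + 1) = x * Ring.choose (x - 1) n := by
    apply mul_left_cancel₀ (show (n.factorial : ℤ) ≠ 0 by positivity)
    linear_combination h1 - Ring.choose x (n + 1) * hn
  obtain ⟨c, hc⟩ := hx
  have hdvd : (2 : ℤ) ∣ ((n : ℤ) + 1) * Ring.choose x (n + 1) := by
    rw [h2, hc]
    exact ⟨c * Ring.choose (c + c - 1) n, by ring⟩
  rcases Int.prime_two.dvd_mul.mp hdvd with h | h
  · exfalso
    rcases he with ⟨k, hk⟩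
    obtain ⟨m, hm⟩ := h
    omega
  · exact h

private lemma getD_sum (l : List ℕ) : ∀ n, l.length ≤ n → ∑ i ∈ range n, l.getD i 0 = l.sum := by
  induction l with
  | nil => intro n _; simp
  | cons x l ih =>
    intro n hn
    simp only [List.length_cons] at hn
    obtain ⟨m, rfl⟩ : ∃ m, n = m + 1 := ⟨n - 1, by omega⟩
    rw [Finset.sum_range_succ']
    simp only [List.getD_cons_succ, List.getD_cons_zero]
    rw [ih m (by omega)]
    simp [add_comm]

private lemma telescope (f : ℕ → ℤ) (n : ℕ) :
    ∑ i ∈ range n, ((i : ℤ) + 1) * (f i - f (i + 1)) = (∑ i ∈ range n, f i) - n * f n := by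
  induction n with
  | zero => simp
  | succ n ih =>
    rw [sum_range_succ, ih, sum_range_succ (f := f)]
    push_cast
    ring

/-- Let `χ ∈ ℤ`, let `a` be a positive even integer, and let `p` be a partition of `a`
all of whose parts are even.  With `d_i = p_i - p_{i+1}` (each `d_i` even), one has
`∏_{i ≥ 1} C(2iχ - 1 + d_i, d_i) ≡ (-1)^{a/2} ∏_{i ≥ 1} C(iχ - 1 + d_i/2, d_i/2)`
modulo `4`.  A partition of `a` has at most `a` parts, so `d_i = 0` and both factors
equal `1` for `i > a`; hence the (finite) products may be taken over `1 ≤ i ≤ a`. -/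
theorem prod_choose_even_parts_mod_four (χ : ℤ) (a : ℕ) (ha : 0 < a) (ha2 : 2 ∣ a)
    (p : Nat.Partition a) (heven : ∀ x ∈ p.parts, 2 ∣ x) :
    (∏ i ∈ Finset.range a,
        Ring.choose (2 * ((i : ℤ) + 1) * χ - 1 + ((partSeq p i - partSeq p (i + 1) : ℕ) : ℤ))
          (partSeq p i - partSeq p (i + 1))) ≡
      (-1) ^ (a / 2) *
        ∏ i ∈ Finset.range a,
          Ring.choose (((i : ℤ) + 1) * χ - 1 + (((partSeq p i - partSeq p (i + 1)) / 2 : ℕ) : ℤ))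
            ((partSeq p i - partSeq p (i + 1)) / 2) [ZMOD 4] := by
  -- basic facts about the part sequence
  have hsorted : (p.parts.sort (· ≥ ·)).Pairwise (· ≥ ·) := p.parts.pairwise_sort _
  have hlen : (p.parts.sort (· ≥ ·)).length ≤ a := by
    rw [Multiset.length_sort]
    calc Multiset.card p.parts = Multiset.card p.parts • 1 := by simp
      _ ≤ p.parts.sum := Multiset.card_nsmul_le_sum (fun x hx => p.parts_pos hx)
      _ = a := p.parts_sum
  have hmono : ∀ i, partSeq p (i + 1) ≤ partSeq p i := by
    intro i
    by_cases h : i + 1 < (p.parts.sort (· ≥ ·)).length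
    · unfold partSeq
      rw [List.getD_eq_getElem _ _ h, List.getD_eq_getElem _ _ (by omega)]
      exact List.pairwise_iff_getElem.mp hsorted i (i + 1) (by omega) h (by omega)
    · unfold partSeq
      rw [List.getD_eq_default _ _ (by omega)]
      exact Nat.zero_le _
  have heven' : ∀ i, 2 ∣ partSeq p i := by
    intro i
    by_cases h : i < (p.parts.sort (· ≥ ·)).length
    · unfold partSeq
      rw [List.getD_eq_getElem _ _ h]
      exact heven _ (by rw [← Multiset.mem_sort (· ≥ ·)]; exact List.getElem_mem _)
    · unfold partSeq
      rw [List.getD_eq_default _ _ (by omega)]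
      exact ⟨0, rfl⟩
  have hzero : partSeq p a = 0 := by
    unfold partSeq
    exact List.getD_eq_default _ _ hlen
  have hsuma : ∑ i ∈ range a, partSeq p i = a := by
    unfold partSeq
    rw [getD_sum _ a hlen]
    have h1 : ((p.parts.sort (· ≥ ·) : List ℕ) : Multiset ℕ) = p.parts := p.parts.sort_eq _
    calc (p.parts.sort (· ≥ ·)).sum
        = ((p.parts.sort (· ≥ ·) : List ℕ) : Multiset ℕ).sum := by rw [Multiset.sum_coe]
      _ = p.parts.sum := by rw [h1]
      _ = a := p.parts_sum
  -- the halved differences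
  have hdvd : ∀ i, 2 ∣ (partSeq p i - partSeq p (i + 1)) :=
    fun i => Nat.dvd_sub (heven' i) (heven' (i + 1))
  have hNsum : 2 * ∑ i ∈ range a, (i + 1) * ((partSeq p i - partSeq p (i + 1)) / 2) = a := by
    have h1 : (∑ i ∈ range a, ((i : ℤ) + 1) * ((partSeq p i - partSeq p (i + 1) : ℕ) : ℤ))
        = (a : ℤ) := by
      calc ∑ i ∈ range a, ((i : ℤ) + 1) * ((partSeq p i - partSeq p (i + 1) : ℕ) : ℤ)
          = ∑ i ∈ range a, ((i : ℤ) + 1) * ((partSeq p i : ℤ) - (partSeq p (i + 1) : ℤ)) :=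
            Finset.sum_congr rfl (fun i _ => by rw [Nat.cast_sub (hmono i)])
        _ = (∑ i ∈ range a, (partSeq p i : ℤ)) - a * (partSeq p a : ℤ) :=
            telescope (fun i => (partSeq p i : ℤ)) a
        _ = (a : ℤ) := by
            rw [hzero]
            push_cast
            rw [mul_zero, sub_zero]
            exact_mod_cast congrArg (fun n : ℕ => (n : ℤ)) hsuma
    have h3 : ∑ i ∈ range a, (i + 1) * (partSeq p i - partSeq p (i + 1)) = a := by
      exact_mod_cast h1
    rw [Finset.mul_sum]
    conv_rhs => rw [← h3]
    refine Finset.sum_congr rfl fun i _ => ?_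
    obtain ⟨e, he⟩ := hdvd i
    rw [he, Nat.mul_div_cancel_left e two_pos]
    ring
  have haN : a / 2 = ∑ i ∈ range a, (i + 1) * ((partSeq p i - partSeq p (i + 1)) / 2) := by omega
  -- reduce to an equation in `ZMod 4`
  have h4 : ((4 : ℕ) : ℤ) = 4 := by norm_num
  rw [← h4, ← ZMod.intCast_eq_intCast_iff]
  rw [Int.cast_prod, Int.cast_mul, Int.cast_prod, Int.cast_pow, Int.cast_neg, Int.cast_one]
  -- rewrite each factor with the key lemma
  have hstep : ∀ i : ℕ, ((Ring.choose
        (2 * ((i : ℤ) + 1) * χ - 1 + ((partSeq p i - partSeq p (i + 1) : ℕ) : ℤ))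
        (partSeq p i - partSeq p (i + 1)) : ℤ) : ZMod 4)
      = (if Odd (((i : ℤ) + 1) * χ) ∧ Odd ((partSeq p i - partSeq p (i + 1)) / 2)
            then (-1 : ZMod 4) else 1)
        * ((Ring.choose
            (((i : ℤ) + 1) * χ - 1 + (((partSeq p i - partSeq p (i + 1)) / 2 : ℕ) : ℤ))
            ((partSeq p i - partSeq p (i + 1)) / 2) : ℤ) : ZMod 4) := by
    intro i
    obtain ⟨e, he⟩ := hdvd i
    rw [he, Nat.mul_div_cancel_left e two_pos]
    have harg : 2 * ((i : ℤ) + 1) * χ - 1 + ((2 * e : ℕ) : ℤ)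
        = 2 * (((i : ℤ) + 1) * χ) - 1 + 2 * ((e : ℕ) : ℤ) := by push_cast; ring
    rw [harg, key]
  rw [Finset.prod_congr rfl (fun i _ => hstep i), Finset.prod_mul_distrib]
  rcases Int.even_or_odd χ with hχ | hχ
  · -- χ even : every local sign is 1
    have hsig : ∀ i : ℕ, (if Odd (((i : ℤ) + 1) * χ) ∧ Odd ((partSeq p i - partSeq p (i + 1)) / 2)
          then (-1 : ZMod 4) else 1) = 1 :=
      fun i => if_neg (fun hcon => (Int.not_odd_iff_even.mpr (hχ.mul_left _)) hcon.1)
    simp only [hsig, Finset.prod_const_one, one_mul]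
    rcases Nat.even_or_odd (a / 2) with hev | hodd
    · rw [hev.neg_one_pow, one_mul]
    · rw [hodd.neg_one_pow]
      obtain ⟨i0, hi0, hoddi⟩ :
          ∃ i ∈ range a, Odd ((i + 1) * ((partSeq p i - partSeq p (i + 1)) / 2)) := by
        by_contra hno
        push_neg at hno
        have hev2 : Even (∑ i ∈ range a, (i + 1) * ((partSeq p i - partSeq p (i + 1)) / 2)) :=
          Finset.even_sum _ (fun i hi => Nat.not_odd_iff_even.mp (hno i hi))
        rw [← haN] at hev2
        exact (Nat.not_odd_iff_even.mpr hev2) hodd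
      obtain ⟨hod1, hod2⟩ := Nat.odd_mul.mp hoddi
      obtain ⟨c, hc⟩ := hχ
      obtain ⟨k, hk⟩ := id hod2
      have hEx : Even (((i0 : ℤ) + 1) * χ - 1
          + (((partSeq p i0 - partSeq p (i0 + 1)) / 2 : ℕ) : ℤ)) :=
        ⟨((i0 : ℤ) + 1) * c + k, by rw [hc, hk]; push_cast; ring⟩
      have hGdvd : (2 : ℤ) ∣ Ring.choose
          (((i0 : ℤ) + 1) * χ - 1 + (((partSeq p i0 - partSeq p (i0 + 1)) / 2 : ℕ) : ℤ))
          ((partSeq p i0 - partSeq p (i0 + 1)) / 2) := even_choose _ _ hEx hod2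
      have hdvdP : (2 : ℤ) ∣ ∏ i ∈ range a, Ring.choose
          (((i : ℤ) + 1) * χ - 1 + (((partSeq p i - partSeq p (i + 1)) / 2 : ℕ) : ℤ))
          ((partSeq p i - partSeq p (i + 1)) / 2) :=
        dvd_trans hGdvd (Finset.dvd_prod_of_mem _ hi0)
      obtain ⟨c2, hc2⟩ := hdvdP
      have hPP : (∏ i ∈ range a, ((Ring.choose
            (((i : ℤ) + 1) * χ - 1 + (((partSeq p i - partSeq p (i + 1)) / 2 : ℕ) : ℤ))
            ((partSeq p i - partSeq p (i + 1)) / 2) : ℤ) : ZMod 4))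
          = ((2 * c2 : ℤ) : ZMod 4) := by rw [← Int.cast_prod, hc2]
      rw [hPP]
      push_cast
      linear_combination (c2 : ZMod 4) * four_eq_zero
  · -- χ odd
    have hsig : ∀ i : ℕ, (if Odd (((i : ℤ) + 1) * χ) ∧ Odd ((partSeq p i - partSeq p (i + 1)) / 2)
          then (-1 : ZMod 4) else 1)
        = (-1 : ZMod 4) ^ ((i + 1) * ((partSeq p i - partSeq p (i + 1)) / 2)) := by
      intro i
      by_cases h : Odd ((i + 1) * ((partSeq p i - partSeq p (i + 1)) / 2))
      · rw [if_pos, h.neg_one_pow]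
        obtain ⟨h1, h2⟩ := Nat.odd_mul.mp h
        exact ⟨Int.odd_mul.mpr ⟨by exact_mod_cast h1, hχ⟩, h2⟩
      · rw [if_neg, (Nat.not_odd_iff_even.mp h).neg_one_pow]
        rintro ⟨h1, h2⟩
        exact h (Nat.odd_mul.mpr ⟨by exact_mod_cast (Int.odd_mul.mp h1).1, h2⟩)
    simp only [hsig]
    rw [Finset.prod_pow_eq_pow_sum, ← haN]
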